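/- Let G be a minimal prime graph complement with a vertex X of degree 2 having neighbors A and B, and let S_Z be the set of vertices distinct from X adjacent to neither A nor B. Then no two vertices of S_Z are adjacent. -/

import Mathlib

/-- A minimal prime graph complement: a graph on at least 2 vertices that is
triangle-free, 3-colorable, edge-maximal with respect to these properties,
and whose complement is connected. -/
def IsMinimalPrimeGraphComplement {V : Type*} [Fintype V] (G : SimpleGraph V) : Prop :=
  Nontrivial V ∧ G.CliqueFree 3 ∧ G.Colorable 3 ∧ Gᶜ.Connected ∧
    ∀ u v : V, u ≠ v → ¬ G.Adj u v →
      ¬ ((G ⊔ SimpleGraph.fromEdgeSet {s(u, v)}).CliqueFree 3 ∧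
         (G ⊔ SimpleGraph.fromEdgeSet {s(u, v)}).Colorable 3)

lemma color_eq_aux {V : Type*} [Fintype V] (G : SimpleGraph V)
    (hG : IsMinimalPrimeGraphComplement G) (X A B z : V)
    (hdeg : ∀ v, G.Adj X v → v = A ∨ v = B)
    (hzX : z ≠ X) (hzA : ¬ G.Adj z A) (hzB : ¬ G.Adj z B)
    (hXz : ¬ G.Adj X z)
    (c : G.Coloring (Fin 3)) : c X = c z := by
  classical
  by_contra hne
  obtain ⟨-, hfree, -, -, hmax⟩ := hG
  apply hmax X z (Ne.symm hzX) hXz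
  have hG3 : ∀ x y w : V, G.Adj x y → G.Adj x w → G.Adj y w → False := by
    intro x y w h1 h2 h3
    exact hfree {x, y, w} (SimpleGraph.is3Clique_iff.mpr ⟨x, y, w, h1, h2, h3, rfl⟩)
  have hcommon : ∀ w : V, G.Adj X w → G.Adj z w → False := by
    intro w h1 h2
    rcases hdeg w h1 with rfl | rfl
    · exact hzA h2
    · exact hzB h2
  constructor
  · intro s hs
    rw [SimpleGraph.is3Clique_iff] at hs
    obtain ⟨x, y, w, hxy, hxw, hyw, -⟩ := hs
    have hcases : ∀ u v : V, (G ⊔ SimpleGraph.fromEdgeSet {s(X, z)}).Adj u v →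
        G.Adj u v ∨ (u = X ∧ v = z) ∨ (u = z ∧ v = X) := by
      intro u v huv
      simp only [SimpleGraph.sup_adj, SimpleGraph.fromEdgeSet_adj,
        Set.mem_singleton_iff, Sym2.eq_iff] at huv
      tauto
    have h1 := hcases _ _ hxy
    have h2 := hcases _ _ hxw
    have h3 := hcases _ _ hyw
    have hyw' : y ≠ w := hyw.ne
    have hxy' : x ≠ y := hxy.ne
    have hxw' : x ≠ w := hxw.ne
    rcases h1 with h1 | ⟨rfl, rfl⟩ | ⟨rfl, rfl⟩ <;>
      rcases h2 with h2 | ⟨e1, e2⟩ | ⟨e1, e2⟩ <;>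
      rcases h3 with h3 | ⟨e3, e4⟩ | ⟨e3, e4⟩ <;>
      subst_vars <;>
      first
        | exact hG3 _ _ _ h1 h2 h3
        | exact hcommon _ h2 (G.symm h3)
        | exact hcommon _ (G.symm h2) h3
        | exact hcommon _ h1 h3
        | exact hcommon _ (G.symm h1) (G.symm h3)
        | exact hcommon _ h1 (G.symm h2)
        | exact hcommon _ (G.symm h1) h2
        | exact hcommon _ h2 h3
        | exact hcommon _ h3 h2
        | exact (hyw' rfl).elim
        | exact (hxy' rfl).elim
        | exact (hxw' rfl).elim
        | exact hXz h1
        | exact hXz (G.symm h1)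
        | exact hXz h2
        | exact hXz (G.symm h2)
        | exact hXz h3
        | exact hXz (G.symm h3)
        | exact hXz h1.symm
        | exact hcommon _ h1.symm h2.symm
        | exact hcommon _ h2.symm h1.symm
        | exact hcommon _ h1 h3.symm
        | exact hcommon _ h3.symm h1
  · refine ⟨SimpleGraph.Coloring.mk c ?_⟩
    intro u v huv
    simp only [SimpleGraph.sup_adj, SimpleGraph.fromEdgeSet_adj,
      Set.mem_singleton_iff, Sym2.eq_iff] at huv
    rcases huv with h | ⟨⟨rfl, rfl⟩ | ⟨rfl, rfl⟩, -⟩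
    · exact c.valid h
    · exact hne
    · exact fun e => hne e.symm

theorem SZ_no_internal_edges {V : Type*} [Fintype V] (G : SimpleGraph V)
    (hG : IsMinimalPrimeGraphComplement G) (X A B : V)
    (hXA : G.Adj X A) (hXB : G.Adj X B) (hAB : A ≠ B)
    (hdeg : ∀ v, G.Adj X v → v = A ∨ v = B)
    (a b : V)
    (haX : a ≠ X) (haA : ¬ G.Adj a A) (haB : ¬ G.Adj a B)
    (hbX : b ≠ X) (hbA : ¬ G.Adj b A) (hbB : ¬ G.Adj b B) :
    ¬ G.Adj a b := by
  intro hab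
  have haAB : a ≠ A ∧ a ≠ B := by
    constructor <;> rintro rfl
    · exact hbA hab.symm
    · exact hbB hab.symm
  have hbAB : b ≠ A ∧ b ≠ B := by
    constructor <;> rintro rfl
    · exact haA hab
    · exact haB hab
  have hXa : ¬ G.Adj X a := fun h => by
    rcases hdeg a h with rfl | rfl
    · exact haAB.1 rfl
    · exact haAB.2 rfl
  have hXb : ¬ G.Adj X b := fun h => by
    rcases hdeg b h with rfl | rfl
    · exact hbAB.1 rfl
    · exact hbAB.2 rfl
  obtain ⟨c⟩ := hG.2.2.1
  have h1 := color_eq_aux G hG X A B a hdeg haX haA haB hXa c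
  have h2 := color_eq_aux G hG X A B b hdeg hbX hbA hbB hXb c
  exact c.valid hab (h1 ▸ h2)
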